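/- Let {ρ_J^{(s)}}_{s∈S} be a family of positive semidefinite operators on a finite-dimensional Hilbert space H_J such that the only projections commuting with all ρ_J^{(s)} are 0 and 1 (irreducibility). If an operator Λ on H_J satisfies Λ ρ_J^{(s)} = β ρ_J^{(s)} Λ for all s ∈ S and some complex number β, and not all ρ_J^{(s)} are zero, then: (a) if β = 1, Λ = c·1 for some complex scalar c; (b) if β ≠ 1 and some ρ_J^{(s)} has nonzero trace, Λ = 0. -/

import Mathlib

open Matrix BigOperators
open scoped ComplexOrder

noncomputable section

namespace Stmt13Aux

variable {n : Type*} [Fintype n] [DecidableEq n]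

lemma exists_proj (W : Submodule ℂ (EuclideanSpace ℂ n)) :
    ∃ P : Matrix n n ℂ, P.IsHermitian ∧ P * P = P ∧
      (∀ A : Matrix n n ℂ, A.IsHermitian →
        (∀ x ∈ W, Matrix.toEuclideanCLM (𝕜 := ℂ) A x ∈ W) → P * A = A * P) ∧
      (P = 0 → W = ⊥) ∧ (P = 1 → W = ⊤) := by
  set Φ := Matrix.toEuclideanCLM (n := n) (𝕜 := ℂ) with hΦ
  set π : EuclideanSpace ℂ n →L[ℂ] EuclideanSpace ℂ n :=
    W.subtypeL ∘L W.orthogonalProjectionOnto with hπdef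
  have hπmem : ∀ x, π x ∈ W := fun x => (W.orthogonalProjectionOnto x).2
  have hπself : ∀ x ∈ W, π x = x := fun x hx => by
    simpa [hπdef] using (Submodule.starProjection_eq_self_iff (K := W)).mpr hx
  have hπorth : ∀ x ∈ Wᗮ, π x = (0 : EuclideanSpace ℂ n) := fun x hx => by
    simp [hπdef, Submodule.orthogonalProjectionOnto_apply_of_mem_orthogonal hx]
  have hπsa : IsSelfAdjoint π := isSelfAdjoint_starProjection W
  refine ⟨Φ.symm π, ?_, ?_, ?_, ?_, ?_⟩
  · show star (Φ.symm π) = Φ.symm π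
    exact (Φ.symm.map_star' π).symm.trans (congrArg Φ.symm hπsa.star_eq)
  · rw [← _root_.map_mul]
    congr 1
    refine ContinuousLinearMap.ext fun x => ?_
    rw [ContinuousLinearMap.mul_apply]
    exact hπself _ (hπmem x)
  · intro A hA hinv
    set T := Φ A with hT
    have hTsa : IsSelfAdjoint T := by
      show star T = T
      rw [hT, ← map_star Φ A]
      exact congrArg Φ hA
    have hTadj : ContinuousLinearMap.adjoint T = T := hTsa.adjoint_eq
    have key : π * T = T * π := by
      refine ContinuousLinearMap.ext fun x => ?_
      rw [ContinuousLinearMap.mul_apply, ContinuousLinearMap.mul_apply]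
      have hy : x - π x ∈ Wᗮ := by
        simpa [hπdef] using Submodule.sub_starProjection_mem_orthogonal (K := W) x
      have hTy : T (x - π x) ∈ Wᗮ := by
        rw [Submodule.mem_orthogonal]
        intro u hu
        rw [← ContinuousLinearMap.adjoint_inner_left, hTadj]
        exact (Submodule.mem_orthogonal W _).mp hy (T u) (hinv u hu)
      have h1 : π (T (π x)) = T (π x) := hπself _ (hinv _ (hπmem x))
      have h2 : π (T (x - π x)) = 0 := hπorth _ hTy
      have hdecomp : T x = T (π x) + T (x - π x) := by
        rw [← map_add]
        congr 1
        abel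
      rw [hdecomp, map_add, h1, h2, add_zero]
    have hA' : A = Φ.symm T := (StarAlgEquiv.symm_apply_apply Φ A).symm
    rw [hA', ← _root_.map_mul, key, _root_.map_mul]
  · intro hP
    have hπ0 : π = 0 := by
      have := congrArg Φ hP
      rwa [StarAlgEquiv.apply_symm_apply, map_zero] at this
    rw [eq_bot_iff]
    intro x hx
    have : π x = x := hπself x hx
    rw [hπ0] at this
    simpa using this.symm
  · intro hP
    have hπ1 : π = 1 := by
      have := congrArg Φ hP
      rwa [StarAlgEquiv.apply_symm_apply, _root_.map_one] at this
    rw [eq_top_iff]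
    intro x _
    have : π x = x := by rw [hπ1]; rfl
    rw [← this]
    exact hπmem x

lemma clm_mul_apply (A B : Matrix n n ℂ) (x : EuclideanSpace ℂ n) :
    Matrix.toEuclideanCLM (𝕜 := ℂ) (A * B) x =
      Matrix.toEuclideanCLM (𝕜 := ℂ) A (Matrix.toEuclideanCLM (𝕜 := ℂ) B x) := by
  rw [_root_.map_mul]
  rfl

end Stmt13Aux

open Stmt13Aux in
/-- Lemma 6(ii′), Schur-type lemma: let `{ρ^{(s)}_J}` be an
irreducible family of positive semidefinite operators (only trivial projections
commute with all of them), not all zero. If `Λ ρ^{(s)}_J = β ρ^{(s)}_J Λ` for all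
`s`, then (a) for `β = 1`, `Λ` is a scalar multiple of the identity, and
(b) for `β ≠ 1`, if some `ρ^{(s)}_J` has nonzero trace then `Λ = 0`. -/
theorem stmt13 {n : Type*} [Fintype n] [DecidableEq n] {S : Type*}
    (ρJ : S → Matrix n n ℂ) (hpsd : ∀ s, (ρJ s).PosSemidef)
    (hirr : ∀ P : Matrix n n ℂ, P.IsHermitian → P * P = P →
      (∀ s, P * ρJ s = ρJ s * P) → P = 0 ∨ P = 1)
    (hnz : ∃ s, ρJ s ≠ 0)
    (Λ : Matrix n n ℂ) (β : ℂ)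
    (hint : ∀ s, Λ * ρJ s = β • (ρJ s * Λ)) :
    (β = 1 → ∃ c : ℂ, Λ = c • (1 : Matrix n n ℂ)) ∧
    (β ≠ 1 → (∃ s, (ρJ s).trace ≠ 0) → Λ = 0) := by
  set Φ := Matrix.toEuclideanCLM (n := n) (𝕜 := ℂ) with hΦ
  -- n is nonempty
  have hne : Nonempty n := by
    by_contra h
    obtain ⟨s, hs⟩ := hnz
    exact hs (by ext i j; exact absurd ⟨i⟩ h)
  have hnontriv : Nontrivial (EuclideanSpace ℂ n) := by
    infer_instance
  constructor
  · -- part (a)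
    intro hβ
    have hcomm : ∀ s, Λ * ρJ s = ρJ s * Λ := by
      intro s
      rw [hint s, hβ, one_smul]
    -- eigenvalue of Λ
    obtain ⟨c, hc⟩ := Module.End.exists_eigenvalue
      ((Φ Λ : EuclideanSpace ℂ n →ₗ[ℂ] EuclideanSpace ℂ n))
    set f : Module.End ℂ (EuclideanSpace ℂ n) :=
      ((Φ Λ : EuclideanSpace ℂ n →ₗ[ℂ] EuclideanSpace ℂ n)) with hf
    set W := f.eigenspace c with hW
    obtain ⟨P, hPH, hPP, hPcomm, hP0, hP1⟩ := exists_proj (n := n) W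
    have hWinv : ∀ s, ∀ x ∈ W, Φ (ρJ s) x ∈ W := by
      intro s x hx
      rw [hW, Module.End.mem_eigenspace_iff] at hx ⊢
      have : Φ Λ (Φ (ρJ s) x) = Φ (ρJ s) (Φ Λ x) := by
        rw [← clm_mul_apply, ← clm_mul_apply, hcomm s]
      show Φ Λ (Φ (ρJ s) x) = c • Φ (ρJ s) x
      rw [this]
      show Φ (ρJ s) (f x) = _
      rw [hx, _root_.map_smul]
    have := hirr P hPH hPP (fun s => hPcomm (ρJ s) (hpsd s).1 (hWinv s))
    rcases this with h0 | h1
    · exact absurd (hP0 h0) hc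
    · have hWtop := hP1 h1
      refine ⟨c, Φ.injective ?_⟩
      refine ContinuousLinearMap.ext fun x => ?_
      have hx : x ∈ W := hWtop ▸ Submodule.mem_top
      rw [hW, Module.End.mem_eigenspace_iff] at hx
      have h2 : Φ (c • (1 : Matrix n n ℂ)) x = c • x := by
        rw [_root_.map_smul, _root_.map_one]
        rfl
      show (Φ Λ) x = (Φ (c • (1 : Matrix n n ℂ))) x
      rw [h2]
      exact hx
  · -- part (b)
    intro hβ ⟨s₀, hs₀⟩
    set W := LinearMap.ker ((Φ Λ : EuclideanSpace ℂ n →ₗ[ℂ] EuclideanSpace ℂ n)) with hW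
    obtain ⟨P, hPH, hPP, hPcomm, hP0, hP1⟩ := exists_proj (n := n) W
    have hWinv : ∀ s, ∀ x ∈ W, Φ (ρJ s) x ∈ W := by
      intro s x hx
      rw [hW, LinearMap.mem_ker] at hx ⊢
      show Φ Λ (Φ (ρJ s) x) = 0
      rw [← clm_mul_apply, hint s, _root_.map_smul]
      have : Φ (ρJ s * Λ) x = Φ (ρJ s) (Φ Λ x) := clm_mul_apply _ _ _
      rw [ContinuousLinearMap.smul_apply, this]
      have hx' : Φ Λ x = 0 := hx
      rw [hx', map_zero, smul_zero]
    have := hirr P hPH hPP (fun s => hPcomm (ρJ s) (hpsd s).1 (hWinv s))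
    rcases this with h0 | h1
    · -- Λ invertible: contradiction
      exfalso
      have hWbot := hP0 h0
      have hdet : Λ.det ≠ 0 := by
        intro hd
        obtain ⟨v, hv, hv0⟩ := (Matrix.exists_mulVec_eq_zero_iff).mpr hd
        have hmem : (WithLp.equiv 2 (n → ℂ)).symm v ∈ W := by
          rw [hW, LinearMap.mem_ker]
          show Φ Λ ((WithLp.equiv 2 (n → ℂ)).symm v) = 0
          rw [show (WithLp.equiv 2 (n → ℂ)).symm v = WithLp.toLp 2 v from rfl, Matrix.toEuclideanCLM_toLp, hv0]
          rfl
        rw [hWbot, Submodule.mem_bot] at hmem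
        apply hv
        have := congrArg (WithLp.equiv 2 (n → ℂ)) hmem
        simpa using this
      have hdu : IsUnit Λ.det := isUnit_iff_ne_zero.mpr hdet
      have hinv1 : Λ * Λ⁻¹ = 1 := Matrix.mul_nonsing_inv Λ hdu
      have key : Λ * ρJ s₀ * Λ⁻¹ = β • ρJ s₀ := by
        rw [hint s₀, Matrix.smul_mul, Matrix.mul_assoc, hinv1, Matrix.mul_one]
      have htr : (Λ * ρJ s₀ * Λ⁻¹).trace = (ρJ s₀).trace := by
        rw [Matrix.trace_mul_comm, ← Matrix.mul_assoc,
          Matrix.nonsing_inv_mul Λ hdu, Matrix.one_mul]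
      rw [key, Matrix.trace_smul] at htr
      have : (β - 1) * (ρJ s₀).trace = 0 := by
        rw [sub_mul, one_mul]
        rw [smul_eq_mul] at htr
        rw [htr, sub_self]
      rcases mul_eq_zero.mp this with h | h
      · exact hβ (by linear_combination h)
      · exact hs₀ h
    · -- Λ = 0
      have hWtop := hP1 h1
      apply Φ.injective
      rw [map_zero]
      refine ContinuousLinearMap.ext fun x => ?_
      have hx : x ∈ W := hWtop ▸ Submodule.mem_top
      rw [hW, LinearMap.mem_ker] at hx
      exact hx
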